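/- Let F be a field with char(F) ≠ 2. For every n ≥ 1, the polynomial z_1 z_2 ⋯ z_{2n} belongs to Id(UT_2(F), ⋆) + ⟨z_1z_2⟩^{TS(*)}. -/

import Mathlib

open scoped BigOperators

set_option maxHeartbeats 1000000
set_option synthInstance.maxHeartbeats 400000

/-- The algebra of 2×2 upper triangular matrices over `F`. -/
def UT2 (F : Type*) [Field F] : Subalgebra F (Matrix (Fin 2) (Fin 2) F) where
  carrier := {M | M 1 0 = 0}
  mul_mem' := by
    intro a b ha hb
    simp only [Set.mem_setOf_eq] at *
    rw [Matrix.mul_apply, Fin.sum_univ_two, ha, hb]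
    ring
  one_mem' := by simp [Matrix.one_apply]
  add_mem' := by
    intro a b ha hb
    simp only [Set.mem_setOf_eq] at *
    simp [Matrix.add_apply, ha, hb]
  zero_mem' := by simp
  algebraMap_mem' := by
    intro r
    simp [Matrix.algebraMap_matrix_apply]

theorem mem_UT2 (F : Type*) [Field F] {M : Matrix (Fin 2) (Fin 2) F} :
    M ∈ UT2 F ↔ M 1 0 = 0 := Iff.rfl

/-- The involution `⋆` on `UT2 F`: `(a c; 0 b) ↦ (b c; 0 a)`. -/
def starUT (F : Type*) [Field F] (M : ↥(UT2 F)) : ↥(UT2 F) :=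
  ⟨!![M.1 1 1, M.1 0 1; 0, M.1 0 0], by rw [mem_UT2]; simp⟩

/-- The involution `s` on `UT2 F`: `(a c; 0 b) ↦ (b -c; 0 a)`. -/
def starS (F : Type*) [Field F] (M : ↥(UT2 F)) : ↥(UT2 F) :=
  ⟨!![M.1 1 1, -(M.1 0 1); 0, M.1 0 0], by rw [mem_UT2]; simp⟩

/-- The free unital associative `F`-algebra `F⟨Y ∪ Z⟩` on the variables
`y_0, y_1, …` (indexed by `Sum.inl`) and `z_0, z_1, …` (indexed by `Sum.inr`). -/
abbrev FA (F : Type*) [Field F] := FreeAlgebra F (ℕ ⊕ ℕ)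

noncomputable def yv (F : Type*) [Field F] (i : ℕ) : FA F := FreeAlgebra.ι F (Sum.inl i)
noncomputable def zv (F : Type*) [Field F] (i : ℕ) : FA F := FreeAlgebra.ι F (Sum.inr i)

noncomputable def fStarAux (F : Type*) [Field F] : FA F →ₐ[F] (FA F)ᵐᵒᵖ :=
  FreeAlgebra.lift F fun v =>
    MulOpposite.op (Sum.elim (fun i => FreeAlgebra.ι F (Sum.inl i))
      (fun i => -FreeAlgebra.ι F (Sum.inr i)) v)

/-- The involution `*` on `F⟨Y ∪ Z⟩`: the unique `F`-linear anti-automorphism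
with `y_i* = y_i` and `z_i* = -z_i`. -/
noncomputable def fStar (F : Type*) [Field F] (f : FA F) : FA F := (fStarAux F f).unop

/-- A symmetric polynomial of `F⟨Y ∪ Z⟩`. -/
def IsSym (F : Type*) [Field F] (f : FA F) : Prop := fStar F f = f
/-- A skew polynomial of `F⟨Y ∪ Z⟩`. -/
def IsSkew (F : Type*) [Field F] (f : FA F) : Prop := fStar F f = -f

/-- A substitution relative to an involution `σ` on `UT2 F`: an algebra homomorphism
sending each `y_i` to a symmetric element and each `z_i` to a skew-symmetric element. -/
def IsSubstWith (F : Type*) [Field F] (σ : ↥(UT2 F) → ↥(UT2 F))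
    (φ : FA F →ₐ[F] ↥(UT2 F)) : Prop :=
  (∀ i, σ (φ (yv F i)) = φ (yv F i)) ∧ (∀ i, σ (φ (zv F i)) = -(φ (zv F i)))

/-- The `*`-polynomial identities of `(UT2 F, σ)`. -/
def IdWith (F : Type*) [Field F] (σ : ↥(UT2 F) → ↥(UT2 F)) : Submodule F (FA F) where
  carrier := {f | ∀ φ : FA F →ₐ[F] ↥(UT2 F), IsSubstWith F σ φ → φ f = 0}
  add_mem' := by
    intro a b ha hb φ hφ
    rw [map_add, ha φ hφ, hb φ hφ, add_zero]
  zero_mem' := by intro φ _; exact map_zero φ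
  smul_mem' := by
    intro c x hx φ hφ
    rw [map_smul, hx φ hφ, smul_zero]

/-- The `*`-central polynomials of `(UT2 F, σ)`. -/
def CWith (F : Type*) [Field F] (σ : ↥(UT2 F) → ↥(UT2 F)) : Submodule F (FA F) where
  carrier := {f | ∀ φ : FA F →ₐ[F] ↥(UT2 F), IsSubstWith F σ φ →
    φ f ∈ Subalgebra.center F ↥(UT2 F)}
  add_mem' := by
    intro a b ha hb φ hφ
    rw [map_add]; exact add_mem (ha φ hφ) (hb φ hφ)
  zero_mem' := by intro φ _; rw [map_zero]; exact zero_mem _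
  smul_mem' := by
    intro c x hx φ hφ
    rw [map_smul]; exact Subalgebra.smul_mem _ (hx φ hφ) c

/-- `⟨z₁z₂⟩^{TS(*)}`: the `F`-linear span of all products of two skew polynomials. -/
def TSz (F : Type*) [Field F] : Submodule F (FA F) :=
  Submodule.span F {f : FA F | ∃ u v, IsSkew F u ∧ IsSkew F v ∧ f = u * v}

/- ### auxiliary lemmas -/

lemma fStar_mul (F : Type*) [Field F] (a b : FA F) :
    fStar F (a * b) = fStar F b * fStar F a := by
  simp [fStar, map_mul]

lemma fStar_add (F : Type*) [Field F] (a b : FA F) :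
    fStar F (a + b) = fStar F a + fStar F b := by
  simp [fStar, map_add]

lemma fStar_smul (F : Type*) [Field F] (c : F) (a : FA F) :
    fStar F (c • a) = c • fStar F a := by
  simp [fStar, map_smul]

lemma fStar_zv (F : Type*) [Field F] (i : ℕ) : fStar F (zv F i) = -(zv F i) := by
  simp [fStar, fStarAux, zv, FreeAlgebra.lift_ι_apply]

lemma fStar_zprod (F : Type*) [Field F] (l : List ℕ) :
    fStar F ((l.map (zv F)).prod) = (-1 : F) ^ l.length • ((l.reverse.map (zv F)).prod) := by
  induction l with
  | nil => simp [fStar]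
  | cons a t ih =>
    simp only [List.map_cons, List.prod_cons, fStar_mul, ih, fStar_zv, List.reverse_cons,
      List.map_append, List.prod_append, List.length_cons]
    simp [pow_succ, mul_smul, mul_comm]

/-- Skew elements of `(UT2 F, ⋆)` commute (char ≠ 2). -/
lemma skew_commute (F : Type*) [Field F] (hchar : ringChar F ≠ 2)
    {A B : ↥(UT2 F)} (hA : starUT F A = -A) (hB : starUT F B = -B) :
    A * B = B * A := by
  have h2 : (2 : F) ≠ 0 := Ring.two_ne_zero hchar
  have key : ∀ M : ↥(UT2 F), starUT F M = -M → M.1 0 1 = 0 ∧ M.1 1 1 = -(M.1 0 0) := by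
    intro M hM
    have hv : (starUT F M).1 = -(M.1) := by rw [hM]; rfl
    have h01 : M.1 0 1 = -(M.1 0 1) := by
      have := congrFun (congrFun hv 0) 1
      simpa [starUT] using this
    have h00 : M.1 1 1 = -(M.1 0 0) := by
      have := congrFun (congrFun hv 0) 0
      simpa [starUT] using this
    constructor
    · have : (2 : F) * M.1 0 1 = 0 := by linear_combination h01
      exact (mul_eq_zero.mp this).resolve_left h2
    · exact h00
  obtain ⟨hA01, hA11⟩ := key A hA
  obtain ⟨hB01, hB11⟩ := key B hB
  have hA10 : A.1 1 0 = 0 := A.2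
  have hB10 : B.1 1 0 = 0 := B.2
  apply Subtype.ext
  show A.1 * B.1 = B.1 * A.1
  ext i j
  fin_cases i <;> fin_cases j <;>
    simp [Matrix.mul_apply, Fin.sum_univ_two, hA01, hA10, hB01, hB10, hA11, hB11] <;> ring

lemma key_lemma (F : Type*) [Field F] (hchar : ringChar F ≠ 2) (i : ℕ) (l : List ℕ)
    (hl : Odd l.length) :
    zv F i * ((l.map (zv F)).prod) ∈ IdWith F (starUT F) ⊔ TSz F := by
  have h2 : (2 : F) ≠ 0 := Ring.two_ne_zero hchar
  set m : FA F := (l.map (zv F)).prod with hm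
  set r : FA F := (l.reverse.map (zv F)).prod with hr
  have hfm : fStar F m = -r := by
    rw [hm, fStar_zprod, hl.neg_one_pow]
    simp [hr]
  have hfr : fStar F r = -m := by
    rw [hr, fStar_zprod]
    simp only [List.length_reverse, List.reverse_reverse, hl.neg_one_pow]
    simp [hm]
  -- the skew part
  have hs : IsSkew F ((2 : F)⁻¹ • (m + r)) := by
    unfold IsSkew
    rw [fStar_smul, fStar_add, hfm, hfr]
    rw [← neg_add, smul_neg, add_comm]
  have hz : IsSkew F (zv F i) := fStar_zv F i
  have hts : zv F i * ((2 : F)⁻¹ • (m + r)) ∈ TSz F :=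
    Submodule.subset_span ⟨zv F i, (2 : F)⁻¹ • (m + r), hz, hs, rfl⟩
  have hid : zv F i * ((2 : F)⁻¹ • (m - r)) ∈ IdWith F (starUT F) := by
    intro φ hφ
    have hcomm : φ m = φ r := by
      rw [hm, hr, map_list_prod, map_list_prod, List.map_map, List.map_map,
        List.map_reverse]
      refine (List.Perm.prod_eq' (List.reverse_perm _) ?_).symm
      apply List.pairwise_of_forall_mem_list
      intro a ha b hb
      simp only [List.mem_reverse, List.mem_map] at ha hb
      obtain ⟨x, -, rfl⟩ := ha
      obtain ⟨y, -, rfl⟩ := hb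
      exact skew_commute F hchar (by simpa using hφ.2 x) (by simpa using hφ.2 y)
    rw [map_mul, map_smul, map_sub, hcomm, sub_self, smul_zero, mul_zero]
  have hdecomp : zv F i * m
      = zv F i * ((2 : F)⁻¹ • (m - r)) + zv F i * ((2 : F)⁻¹ • (m + r)) := by
    rw [← mul_add, ← smul_add]
    congr 1
    have h : (m - r) + (m + r) = (2 : F) • m := by rw [two_smul]; abel
    rw [h, smul_smul, inv_mul_cancel₀ h2, one_smul]
  rw [hdecomp]
  exact Submodule.add_mem _ (Submodule.mem_sup_left hid) (Submodule.mem_sup_right hts)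

theorem stmt_6 (F : Type*) [Field F] (hchar : ringChar F ≠ 2) (n : ℕ) (hn : 1 ≤ n) :
    (List.ofFn fun i : Fin (2 * n) => zv F i).prod ∈ IdWith F (starUT F) ⊔ TSz F := by
  have hofn : (List.ofFn fun i : Fin (2 * n) => zv F i)
      = (List.range (2 * n)).map (zv F) := by
    rw [List.ofFn_eq_map, ← List.map_coe_finRange_eq_range, List.map_map]
    rfl
  obtain ⟨k, hk⟩ : ∃ k, 2 * n = k + 1 := ⟨2 * n - 1, by omega⟩
  have hkodd : Odd k := Nat.odd_iff.mpr (by omega)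
  rw [hofn, hk, List.range_succ_eq_map, List.map_cons, List.prod_cons, List.map_map]
  have : (zv F ∘ Nat.succ) = fun x => zv F (x + 1) := rfl
  have h := key_lemma F hchar 0 ((List.range k).map Nat.succ) (by simpa using hkodd)
  simpa using h
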